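/- Let (W,+) be a commutative semigroup, A ⊆ W an ideal of (W,+), and e ∈ P(A). Then H(e) = W(e) \ ⋃_{f ∈ P(A)} (W(f) \ H(f)). -/
import Mathlib


open Pointwise

/-- Principal left ideal W_L(u) = (W + {u}) ∪ {u}. -/
def WLset {W : Type*} [AddSemigroup W] (u : W) : Set W :=
  ((Set.univ : Set W) + ({u} : Set W)) ∪ {u}

/-- Principal right ideal W_R(u) = ({u} + W) ∪ {u}. -/
def WRset {W : Type*} [AddSemigroup W] (u : W) : Set W :=
  (({u} : Set W) + (Set.univ : Set W)) ∪ {u}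

/-- Principal two-sided ideal W(u) = (W_L(u) + W) ∪ W_L(u). -/
def WIset {W : Type*} [AddSemigroup W] (u : W) : Set W :=
  (WLset u + (Set.univ : Set W)) ∪ WLset u

/-- Green L-class. -/
def Lclass {W : Type*} [AddSemigroup W] (u : W) : Set W := {v | WLset u = WLset v}

/-- Green R-class. -/
def Rclass {W : Type*} [AddSemigroup W] (u : W) : Set W := {v | WRset u = WRset v}

/-- Green H-class. -/
def Hclass {W : Type*} [AddSemigroup W] (u : W) : Set W :=
  {v | WLset u = WLset v ∧ WRset u = WRset v}

def IsLeftIdealSG {W : Type*} [AddSemigroup W] (A : Set W) : Prop :=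
  (Set.univ : Set W) + A ⊆ A

def IsRightIdealSG {W : Type*} [AddSemigroup W] (A : Set W) : Prop :=
  A + (Set.univ : Set W) ⊆ A

def IsIdealSG {W : Type*} [AddSemigroup W] (A : Set W) : Prop :=
  IsLeftIdealSG A ∧ IsRightIdealSG A

/-- The set E(W) of idempotents. -/
def Eset (W : Type*) [AddSemigroup W] : Set W := {e | e + e = e}

/-- The Rees order: f ≤_H e iff e + f = f + e = f. -/
def ReesLE {W : Type*} [AddSemigroup W] (f e : W) : Prop := e + f = f ∧ f + e = f

/-- E^≤(e) = {f ∈ E(W) | f ≤_H e}. -/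
def Ele {W : Type*} [AddSemigroup W] (e : W) : Set W := {f ∈ Eset W | ReesLE f e}

/-- E^lin(W): idempotents α such that ≤_H is a total order on E^≤(α). -/
def Elin (W : Type*) [AddSemigroup W] : Set W :=
  {α ∈ Eset W | ∀ f ∈ Ele α, ∀ g ∈ Ele α, ReesLE f g ∨ ReesLE g f}

def Afin (W : Type*) [AddSemigroup W] : Set W :=
  {α ∈ Elin W | (Ele α).Finite ∧ ∀ w ∉ Ele α, w + α = α ∧ α + w = α}

/-- The set A(W) of quasi-absorbing elements. -/
def AW (W : Type*) [AddSemigroup W] : Set W :=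
  {α ∈ Elin W | ∀ w ∉ Ele α, w + α = α ∧ α + w = α}

/-- Ā_n = ⋃_{i=1}^n A_i. -/
def Abar (W : Type*) [AddSemigroup W] : ℕ → Set W
  | 0 => ∅
  | n + 1 => Abar W n ∪ {α | α ∉ Abar W n ∧ ∀ w ∉ Abar W n, w + α = α ∧ α + w = α}

/-- The sets A_n from the stepwise construction. -/
def Astep (W : Type*) [AddSemigroup W] : ℕ → Set W
  | 0 => ∅
  | n + 1 => {α | α ∉ Abar W n ∧ ∀ w ∉ Abar W n, w + α = α ∧ α + w = α}

/-- The set A_s(W) of stepwise quasi-absorbing elements. -/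
def As (W : Type*) [AddSemigroup W] : Set W := {α | ∃ n, α ∈ Astep W n}

/-- The set P(A) of A-primitive idempotents. -/
def Pset {W : Type*} [AddSemigroup W] (A : Set W) : Set W :=
  {e | e ∈ Eset W \ A ∧ ∀ f ∈ Eset W, ReesLE f e → f = e ∨ f ∈ A}

/-- G ⊆ W is a group under +: closed, with a two-sided identity and inverses. -/
def IsGroupOn {W : Type*} [AddSemigroup W] (G : Set W) : Prop :=
  (∀ a ∈ G, ∀ b ∈ G, a + b ∈ G) ∧
  ∃ e ∈ G, (∀ a ∈ G, a + e = a ∧ e + a = a) ∧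
    ∀ a ∈ G, ∃ b ∈ G, a + b = e ∧ b + a = e

/-- D is an A-minimal ideal. -/
def IsMinimalIdealRel {W : Type*} [AddSemigroup W] (A D : Set W) : Prop :=
  IsIdealSG D ∧ ¬ D ⊆ A ∧ ∀ E : Set W, IsIdealSG E → E ⊂ D → E ⊆ A

/-- D is an ideal of the subsemigroup (V,+). -/
def IsIdealIn {W : Type*} [AddSemigroup W] (V D : Set W) : Prop :=
  D ⊆ V ∧ V + D ⊆ D ∧ D + V ⊆ D

/-- The subsemigroup (V,+) is A-simple. -/
def IsSimpleRel {W : Type*} [AddSemigroup W] (V A : Set W) : Prop :=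
  A ⊂ V ∧ ∀ D : Set W, IsIdealIn V D → D = V ∨ D ⊆ A

/-- A bottleneck ideal. -/
def IsBottleneck {W : Type*} [AddSemigroup W] (A : Set W) : Prop :=
  IsIdealSG A ∧ ∀ D : Set W, IsIdealSG D → D ⊆ A ∨ A ⊆ D

lemma wl_mem_self' {W : Type*} [AddSemigroup W] (u : W) : u ∈ WLset u := Or.inr rfl

lemma add_mem_wl' {W : Type*} [AddSemigroup W] (w u : W) : w + u ∈ WLset u :=
  Or.inl ⟨w, trivial, u, rfl, rfl⟩

lemma wl_add_closed' {W : Type*} [AddCommSemigroup W] {v u : W} (hv : v ∈ WLset u)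
    (w : W) : w + v ∈ WLset u := by
  rcases hv with ⟨x, -, y, hy, hxy⟩ | hv
  · rcases hy with rfl
    rw [← hxy, ← add_assoc]
    exact add_mem_wl' _ _
  · rcases hv with rfl
    exact add_mem_wl' _ _

lemma wl_subset' {W : Type*} [AddCommSemigroup W] {v u : W} (hv : v ∈ WLset u) :
    WLset v ⊆ WLset u := by
  rintro y (⟨x, -, z, hz, hxy⟩ | hy)
  · rcases hz with rfl; rw [← hxy]; exact wl_add_closed' hv x
  · rcases hy with rfl; exact hv

lemma wi_eq_wl' {W : Type*} [AddCommSemigroup W] (u : W) : WIset u = WLset u := by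
  apply Set.Subset.antisymm
  · rintro y (⟨x, hx, z, -, hxy⟩ | hy)
    · rw [← hxy]; show x + z ∈ WLset u; rw [add_comm]; exact wl_add_closed' hx z
    · exact hy
  · exact Set.subset_union_right

lemma wr_eq_wl' {W : Type*} [AddCommSemigroup W] (u : W) : WRset u = WLset u := by
  unfold WRset WLset
  rw [add_comm ({u} : Set W)]

lemma prim_eq' {W : Type*} [AddCommSemigroup W] {A : Set W} {e f : W}
    (he : e ∈ Pset A) (hf : f ∈ Pset A) (h : e ∈ WLset f) : e = f := by
  rcases h with ⟨w, -, z, hz, hwz⟩ | h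
  · have hz' : z = f := hz
    have hff : f + f = f := hf.1.1
    have hef : e + f = e := by rw [← hwz, hz', add_assoc, hff]
    have : e = f ∨ e ∈ A := hf.2 e he.1.1 ⟨by rw [add_comm]; exact hef, hef⟩
    rcases this with h | h
    · exact h
    · exact absurd h he.1.2
  · exact h

theorem quasi_primitive_H_comm {W : Type*} [AddCommSemigroup W] (A : Set W)
    (hA : IsIdealSG A) (e : W) (he : e ∈ Pset A) :
    Hclass e = WIset e \ ⋃ f ∈ Pset A, (WIset f \ Hclass f) := by
  ext v
  simp only [Set.mem_diff, Set.mem_iUnion, not_exists, exists_prop, not_and, not_not]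
  constructor
  · rintro ⟨hL, hR⟩
    have hvWL : v ∈ WLset e := hL ▸ wl_mem_self' v
    refine ⟨by rw [wi_eq_wl']; exact hvWL, ?_⟩
    intro f hf hvf
    rw [wi_eq_wl'] at hvf
    have hsub : WLset e ⊆ WLset f := hL ▸ wl_subset' hvf
    have : e = f := prim_eq' he hf (hsub (wl_mem_self' e))
    rw [← this]
    exact ⟨hL, hR⟩
  · rintro ⟨hvWI, hnot⟩
    exact hnot e he hvWI
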